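/- Let t be a non-negative integer, let G be a t-connected chordal graph, and let τ be a threshold function for G with τ(u) ≤ t for every vertex u. Then pi(G, τ) ≤ C(t+1, 2) = t(t+1)/2. -/

import Mathlib

open SimpleGraph

universe u

/-- `H` is closed under the activation rule: any vertex with at least `τ u` neighbors
in `H` belongs to `H`. -/
def HullClosed {V : Type u} (G : SimpleGraph V) (τ : V → ℤ) (H : Set V) : Prop :=
  ∀ u : V, (τ u ≤ ((G.neighborSet u ∩ H).ncard : ℤ)) → u ∈ H

/-- The hull `H_{(G,τ)}(D)`: smallest superset of `D` closed under the activation rule. -/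
def hull {V : Type u} (G : SimpleGraph V) (τ : V → ℤ) (D : Set V) : Set V :=
  ⋂₀ {H : Set V | D ⊆ H ∧ HullClosed G τ H}

/-- `D` is a dynamic monopoly (target set) of `(G,τ)`. -/
def IsDynMonopoly {V : Type u} (G : SimpleGraph V) (τ : V → ℤ) (D : Set V) : Prop :=
  hull G τ D = Set.univ

/-- `dyn(G,τ)`: minimum order of a dynamic monopoly. -/
noncomputable def dynNum {V : Type u} (G : SimpleGraph V) (τ : V → ℤ) : ℕ :=
  sInf {k | ∃ D : Set V, IsDynMonopoly G τ D ∧ D.ncard = k}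

/-- `σ` is a partial incentive of `(G,τ)`. -/
def IsPartialIncentive {V : Type u} (G : SimpleGraph V) (τ : V → ℤ) (σ : V → ℕ) : Prop :=
  hull G (fun u => τ u - σ u) ∅ = Set.univ

/-- `pi(G,τ)`: minimum weight of a partial incentive. -/
noncomputable def piNum {V : Type u} [Fintype V] (G : SimpleGraph V) (τ : V → ℤ) : ℕ :=
  sInf {k | ∃ σ : V → ℕ, IsPartialIncentive G τ σ ∧ ∑ u, σ u = k}

/-- `I` is a `κ`-degenerate set in `G`: there is a linear order of `I` in which every
vertex has at most `κ u` neighbors among its predecessors. -/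
def Degenerate {V : Type u} (G : SimpleGraph V) (κ : V → ℤ) (I : Set V) : Prop :=
  ∃ l : List V, l.Nodup ∧ {v | v ∈ l} = I ∧
    ∀ i : Fin l.length,
      ((G.neighborSet (l.get i) ∩ {w | w ∈ l.take (i : ℕ)}).ncard : ℤ) ≤ κ (l.get i)

/-- The graph `G'` of Lemma 1: for every edge `uv` of `G` add an independent set of
`n` new vertices adjacent exactly to `u` and `v`. -/
def lemma1Graph {V : Type u} (G : SimpleGraph V) (n : ℕ) :
    SimpleGraph (V ⊕ (G.edgeSet × Fin n)) :=
  SimpleGraph.fromRel (fun x y =>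
    match x, y with
    | Sum.inl a, Sum.inl b => G.Adj a b
    | Sum.inl a, Sum.inr e => a ∈ (e.1.1 : Sym2 V)
    | _, _ => False)

/-- The graph `G'` of Lemma 2: to every vertex `u` with `τ u > 0` attach a path `P_u`
of order `τ u`, joining `u` to all vertices of `P_u`. -/
def attachPaths {V : Type u} (G : SimpleGraph V) (τ : V → ℤ) :
    SimpleGraph (V ⊕ (Σ u : V, Fin (τ u).toNat)) :=
  SimpleGraph.fromRel (fun x y =>
    match x, y with
    | Sum.inl a, Sum.inl b => G.Adj a b
    | Sum.inl a, Sum.inr s => a = s.1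
    | Sum.inr s, Sum.inr t => s.1 = t.1 ∧ (s.2 : ℕ) + 1 = (t.2 : ℕ)
    | _, _ => False)

/-- `G` contains `H` as a minor. -/
def HasMinor {V : Type u} {W : Type} (G : SimpleGraph V) (H : SimpleGraph W) : Prop :=
  ∃ φ : W → Set V,
    (∀ w, (φ w).Nonempty) ∧
    (∀ w, (G.induce (φ w)).Connected) ∧
    (Pairwise fun w w' => Disjoint (φ w) (φ w')) ∧
    ∀ w w', H.Adj w w' → ∃ a ∈ φ w, ∃ b ∈ φ w', G.Adj a b

/-- Planarity, via Wagner's theorem: no `K₅` minor and no `K_{3,3}` minor. -/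
def IsPlanar {V : Type u} (G : SimpleGraph V) : Prop :=
  ¬ HasMinor G (completeGraph (Fin 5)) ∧
  ¬ HasMinor G (completeBipartiteGraph (Fin 3) (Fin 3))

/-- Chordality: every cycle of length at least four has a chord. -/
def IsChordal {V : Type u} (G : SimpleGraph V) : Prop :=
  ∀ ⦃v : V⦄ (c : G.Walk v v), c.IsCycle → 4 ≤ c.length →
    ∃ u w, u ∈ c.support ∧ w ∈ c.support ∧ G.Adj u w ∧ s(u, w) ∉ c.edges

/-- `t`-connectedness: more than `t` vertices, and removing fewer than `t` vertices
leaves the graph connected. -/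
def TConnected {V : Type u} [Fintype V] (G : SimpleGraph V) (t : ℕ) : Prop :=
  t < Fintype.card V ∧ ∀ S : Set V, S.ncard < t → (G.induce (Sᶜ)).Connected

/-- Outside neighbors `N⁺(A)` of `A`. -/
def Nplus {V : Type u} (G : SimpleGraph V) (A : Set V) : Set V :=
  {v | v ∉ A ∧ ∃ u ∈ A, G.Adj u v}

/-- Boundary `N⁻(B) = N⁺(V ∖ B)` of `B`. -/
def Nminus {V : Type u} (G : SimpleGraph V) (B : Set V) : Set V :=
  Nplus G Bᶜ

/-- `B` is an `A`-strong region. -/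
def StrongRegion {V : Type u} (G : SimpleGraph V) (τ : V → ℤ) (A B : Set V) : Prop :=
  ¬ B ⊆ hull G τ (A ∪ Nplus G B)

/-- `G` has a tree-decomposition of width at most `w`. -/
def HasTreeDecompOfWidthLE {V : Type u} (G : SimpleGraph V) (w : ℕ) : Prop :=
  ∃ (ι : Type) (T : SimpleGraph ι) (bag : ι → Set V),
    T.IsTree ∧
    (∀ v, ∃ t, v ∈ bag t) ∧
    (∀ u v, G.Adj u v → ∃ t, u ∈ bag t ∧ v ∈ bag t) ∧
    (∀ v, (T.induce {t | v ∈ bag t}).Connected) ∧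
    (∀ t, (bag t).ncard ≤ w + 1)


set_option linter.unusedSectionVars false
set_option linter.unusedVariables false

section WalkIn
variable {V : Type} (G : SimpleGraph V)

/-- Reachability via walks confined to `s`. -/
def WalkIn (s : Set V) (u v : V) : Prop :=
  ∃ p : G.Walk u v, ∀ x ∈ p.support, x ∈ s

variable {G}

namespace WalkIn

lemma refl {s : Set V} {u : V} (hu : u ∈ s) : WalkIn G s u u :=
  ⟨Walk.nil, by simp [hu]⟩

lemma symm {s : Set V} {u v : V} (h : WalkIn G s u v) : WalkIn G s v u := by
  obtain ⟨p, hp⟩ := h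
  exact ⟨p.reverse, by intro x hx; apply hp; rwa [Walk.support_reverse, List.mem_reverse] at hx⟩

lemma trans {s : Set V} {u v w : V} (h : WalkIn G s u v) (h' : WalkIn G s v w) :
    WalkIn G s u w := by
  obtain ⟨p, hp⟩ := h; obtain ⟨q, hq⟩ := h'
  exact ⟨p.append q, by intro x hx; rw [Walk.mem_support_append_iff] at hx
                        exact hx.elim (hp x) (hq x)⟩

lemma concat {s : Set V} {u v w : V} (h : WalkIn G s u v) (ha : G.Adj v w) (hw : w ∈ s) :
    WalkIn G s u w := by
  obtain ⟨p, hp⟩ := h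
  refine ⟨p.concat ha, ?_⟩
  intro x hx
  rw [Walk.support_concat, List.mem_append] at hx
  rcases hx with hx | hx
  · exact hp x hx
  · simp at hx; subst hx; exact hw

lemma mono {s s' : Set V} (hss : s ⊆ s') {u v : V} (h : WalkIn G s u v) : WalkIn G s' u v := by
  obtain ⟨p, hp⟩ := h; exact ⟨p, fun x hx => hss (hp x hx)⟩

lemma of_support [DecidableEq V] {s : Set V} {u v x : V} (p : G.Walk u v) (hp : ∀ y ∈ p.support, y ∈ s)
    (hx : x ∈ p.support) : WalkIn G s u x :=
  ⟨p.takeUntil x hx, fun y hy => hp y (p.support_takeUntil_subset hx hy)⟩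

end WalkIn

/-- A connected induce graph gives confined walks. -/
lemma induce_connected_walkIn {s : Set V} (h : (G.induce s).Connected)
    {u v : V} (hu : u ∈ s) (hv : v ∈ s) : WalkIn G s u v := by
  have hr : (G.induce s).Reachable ⟨u, hu⟩ ⟨v, hv⟩ := h.preconnected _ _
  obtain ⟨w⟩ := hr
  -- convert the induced walk to a confined walk
  suffices H : ∀ (a b : s) (w : (G.induce s).Walk a b), WalkIn G s a b from H _ _ w
  intro a b w
  induction w with
  | @nil a => exact WalkIn.refl a.2
  | @cons a c b h w ih =>
      have hadj : G.Adj a c := h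
      obtain ⟨p, hp⟩ := ih
      refine ⟨Walk.cons hadj p, ?_⟩
      intro x hx
      rw [Walk.support_cons, List.mem_cons] at hx
      rcases hx with rfl | hx
      · exact a.2
      · exact hp x hx

end WalkIn


section B
variable {V : Type} {G : SimpleGraph V} [DecidableEq V]

lemma two_le_length {u w : V} (hne : u ≠ w) (hnadj : ¬ G.Adj u w) (p : G.Walk u w) :
    2 ≤ p.length := by
  cases p with
  | nil => exact absurd rfl hne
  | cons h q =>
      cases q with
      | nil => exact absurd h hnadj
      | cons h' q' => simp only [Walk.length_cons]; omega

lemma length_takeUntil_pos {u v w : V} (p : G.Walk v w) (h : u ∈ p.support) (hne : v ≠ u) :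
    0 < (p.takeUntil u h).length := by
  by_contra hl
  push_neg at hl
  interval_cases hl' : (p.takeUntil u h).length
  exact hne (Walk.eq_of_length_eq_zero hl')

/-- Shortcut a chord: if `x, y` on the walk are adjacent but `s(x,y)` is not an edge
of the walk, there is a strictly shorter walk with support inside the old one. -/
lemma chord_shortcut {u w x y : V} (p : G.Walk u w) (hx : x ∈ p.support) (hy : y ∈ p.support)
    (hadj : G.Adj x y) (hne : s(x, y) ∉ p.edges) :
    ∃ q : G.Walk u w, q.length < p.length ∧ ∀ z ∈ q.support, z ∈ p.support := by
  induction p with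
  | nil =>
      simp only [Walk.support_nil, List.mem_singleton] at hx hy
      subst hx; subst hy; exact absurd hadj (G.irrefl)
  | @cons u c w h q ih =>
      rw [Walk.support_cons, List.mem_cons] at hx hy
      by_cases hxu : x = u
      · subst hxu
        -- y ∈ q.support (else y = x, impossible)
        have hyq : y ∈ q.support := by
          rcases hy with rfl | hy
          · exact absurd hadj (G.irrefl)
          · exact hy
        have hyc : y ≠ c := by
          rintro rfl
          exact hne (by simp [Walk.edges_cons])
        have hlen : 0 < (q.takeUntil y hyq).length := length_takeUntil_pos q hyq (Ne.symm hyc)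
        refine ⟨Walk.cons hadj (q.dropUntil y hyq), ?_, ?_⟩
        · have := congrArg Walk.length (q.take_spec hyq)
          rw [Walk.length_append] at this
          simp only [Walk.length_cons]
          omega
        · intro z hz
          rw [Walk.support_cons, List.mem_cons] at hz ⊢
          rcases hz with rfl | hz
          · exact Or.inl rfl
          · exact Or.inr (q.support_dropUntil_subset hyq hz)
      · have hxq : x ∈ q.support := hx.resolve_left hxu
        by_cases hyu : y = u
        · subst hyu
          have hxc : x ≠ c := by
            rintro rfl
            exact hne (by simp [Walk.edges_cons, Sym2.eq_swap])
          have hlen : 0 < (q.takeUntil x hxq).length := length_takeUntil_pos q hxq (Ne.symm hxc)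
          refine ⟨Walk.cons hadj.symm (q.dropUntil x hxq), ?_, ?_⟩
          · have := congrArg Walk.length (q.take_spec hxq)
            rw [Walk.length_append] at this
            simp only [Walk.length_cons]
            omega
          · intro z hz
            rw [Walk.support_cons, List.mem_cons] at hz ⊢
            rcases hz with rfl | hz
            · exact Or.inl rfl
            · exact Or.inr (q.support_dropUntil_subset hxq hz)
        · have hyq : y ∈ q.support := hy.resolve_left hyu
          have hne' : s(x, y) ∉ q.edges := fun hmem => hne (by simp [Walk.edges_cons, hmem])
          obtain ⟨r, hr1, hr2⟩ := ih hxq hyq hne'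
          refine ⟨Walk.cons h r, ?_, ?_⟩
          · simp only [Walk.length_cons]; omega
          · intro z hz
            rw [Walk.support_cons, List.mem_cons] at hz ⊢
            exact hz.imp id (hr2 z)

/-- Existence of a minimal, induced ("no chord") path among walks with support in `C`. -/
lemma exists_min_induced_walk {u w : V} {C : Set V}
    (hex : ∃ p : G.Walk u w, ∀ x ∈ p.support, x ∈ C) :
    ∃ p : G.Walk u w, p.IsPath ∧ (∀ x ∈ p.support, x ∈ C) ∧
      ∀ x ∈ p.support, ∀ y ∈ p.support, G.Adj x y → s(x, y) ∈ p.edges := by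
  classical
  set T : Set ℕ := {k | ∃ p : G.Walk u w, (∀ x ∈ p.support, x ∈ C) ∧ p.length = k} with hT
  have hTne : T.Nonempty := by obtain ⟨p, hp⟩ := hex; exact ⟨p.length, p, hp, rfl⟩
  obtain ⟨p, hp, hplen⟩ : ∃ p : G.Walk u w, (∀ x ∈ p.support, x ∈ C) ∧ p.length = sInf T :=
    Nat.sInf_mem hTne
  -- replace by bypass
  have hbC : ∀ x ∈ p.bypass.support, x ∈ C := fun x hx => hp x (p.support_bypass_subset hx)
  have hblen : p.bypass.length = sInf T := by
    have h1 : p.bypass.length ≤ sInf T := hplen ▸ p.length_bypass_le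
    have h2 : sInf T ≤ p.bypass.length := Nat.sInf_le ⟨p.bypass, hbC, rfl⟩
    omega
  refine ⟨p.bypass, p.bypass_isPath, hbC, ?_⟩
  intro x hx y hy hadj
  by_contra hne
  obtain ⟨q, hq1, hq2⟩ := chord_shortcut p.bypass hx hy hadj hne
  have : sInf T ≤ q.length := Nat.sInf_le ⟨q, fun z hz => hbC z (hq2 z hz), rfl⟩
  omega

end B


section C
variable {V : Type} {G : SimpleGraph V} [DecidableEq V]

/-- In a chordal graph, two vertices joined through two "sides" `A` and `B` with no
edges between them must be adjacent. -/
lemma sep_clique (hch : IsChordal G) {A B : Set V} (hAB : Disjoint A B)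
    (hnoedge : ∀ a ∈ A, ∀ b ∈ B, ¬ G.Adj a b)
    {u w : V} (hu : u ∉ A ∪ B) (hw : w ∉ A ∪ B) (hne : u ≠ w)
    (hA : ∃ p : G.Walk u w, ∀ x ∈ p.support, x ∈ A ∪ {u, w})
    (hB : ∃ p : G.Walk u w, ∀ x ∈ p.support, x ∈ B ∪ {u, w}) :
    G.Adj u w := by
  by_contra hnadj
  have huA : u ∉ A := fun h => hu (Or.inl h)
  have huB : u ∉ B := fun h => hu (Or.inr h)
  have hwA : w ∉ A := fun h => hw (Or.inl h)
  have hwB : w ∉ B := fun h => hw (Or.inr h)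
  obtain ⟨P, hPpath, hPC, hPchord⟩ := exists_min_induced_walk hA
  obtain ⟨Q, hQpath, hQC, hQchord⟩ := exists_min_induced_walk hB
  have hPlen : 2 ≤ P.length := two_le_length hne hnadj P
  have hQlen : 2 ≤ Q.length := two_le_length hne hnadj Q
  set c : G.Walk u u := P.append Q.reverse with hc
  -- support characterizations
  have hPsupp : ∀ x ∈ P.support, x ∈ A ∪ {u, w} := hPC
  have hQsupp : ∀ x ∈ Q.support, x ∈ B ∪ {u, w} := hQC
  have hmemQrev : ∀ x, x ∈ Q.reverse.support ↔ x ∈ Q.support := by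
    intro x; rw [Walk.support_reverse, List.mem_reverse]
  have hcyc : c.IsCycle := by
    rw [Walk.isCycle_def]
    refine ⟨⟨?_⟩, ?_, ?_⟩
    · -- edges nodup
      rw [Walk.edges_append]
      rw [List.nodup_append]
      refine ⟨hPpath.isTrail.edges_nodup, (hQpath.reverse).isTrail.edges_nodup, ?_⟩
      intro e heP e' heQ hee'
      subst hee'
      have heQ' : e ∈ Q.edges := by
        rw [Walk.edges_reverse, List.mem_reverse] at heQ; exact heQ
      induction e with
      | h d₁ d₂ =>
        have hd1P : d₁ ∈ P.support := P.fst_mem_support_of_mem_edges heP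
        have hd2P : d₂ ∈ P.support := P.snd_mem_support_of_mem_edges heP
        have hd1Q : d₁ ∈ Q.support := Q.fst_mem_support_of_mem_edges heQ'
        have hd2Q : d₂ ∈ Q.support := Q.snd_mem_support_of_mem_edges heQ'
        have hadj12 : G.Adj d₁ d₂ := P.adj_of_mem_edges heP
        have hd1 : d₁ = u ∨ d₁ = w := by
          rcases hPsupp d₁ hd1P with h1 | h1
          · rcases hQsupp d₁ hd1Q with h2 | h2
            · exact absurd (hAB.ne_of_mem h1 h2) (fun hh => hh rfl)
            · exact h2
          · exact h1
        have hd2 : d₂ = u ∨ d₂ = w := by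
          rcases hPsupp d₂ hd2P with h1 | h1
          · rcases hQsupp d₂ hd2Q with h2 | h2
            · exact absurd (hAB.ne_of_mem h1 h2) (fun hh => hh rfl)
            · exact h2
          · exact h1
        have hd12 : d₁ ≠ d₂ := hadj12.ne
        rcases hd1 with rfl | rfl <;> rcases hd2 with rfl | rfl
        · exact hd12 rfl
        · exact hnadj hadj12
        · exact hnadj hadj12.symm
        · exact hd12 rfl
    · -- c ≠ nil
      intro hnil
      have : c.length = 0 := by rw [hnil]; rfl
      rw [hc, Walk.length_append] at this
      omega
    · -- support tail nodup
      have htail : c.support.tail = P.support.tail ++ Q.reverse.support.tail := by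
        rw [hc, Walk.support_append]
        rw [P.support_eq_cons]
        rfl
      rw [htail, List.nodup_append]
      have hPnd := hPpath.support_nodup
      have hQnd := hQpath.reverse.support_nodup
      rw [P.support_eq_cons] at hPnd
      rw [Q.reverse.support_eq_cons] at hQnd
      rcases List.nodup_cons.mp hPnd with ⟨huP, hPtnd⟩
      rcases List.nodup_cons.mp hQnd with ⟨hwQ, hQtnd⟩
      refine ⟨hPtnd, hQtnd, ?_⟩
      intro z hzP z' hzQ hzz'
      subst hzz'
      have hzP' : z ∈ P.support := by rw [P.support_eq_cons]; exact List.mem_cons_of_mem _ hzP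
      have hzQ' : z ∈ Q.support := by
        rw [← hmemQrev]
        rw [Q.reverse.support_eq_cons]; exact List.mem_cons_of_mem _ hzQ
      have hzu : z ≠ u := fun h => huP (h ▸ hzP)
      have hzw : z ≠ w := fun h => hwQ (h ▸ hzQ)
      have h1 : z ∈ A := by
        rcases hPsupp z hzP' with h | h
        · exact h
        · rcases h with h | h
          · exact absurd h hzu
          · exact absurd h hzw
      have h2 : z ∈ B := by
        rcases hQsupp z hzQ' with h | h
        · exact h
        · rcases h with h | h
          · exact absurd h hzu
          · exact absurd h hzw
      exact (hAB.ne_of_mem h1 h2) rfl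
  have hclen : 4 ≤ c.length := by
    rw [hc, Walk.length_append, Walk.length_reverse]; omega
  obtain ⟨x, y, hx, hy, hadj, hnedge⟩ := hch c hcyc hclen
  have hxm : x ∈ P.support ∨ x ∈ Q.support := by
    rw [hc, Walk.mem_support_append_iff] at hx
    exact hx.imp id (hmemQrev x).mp
  have hym : y ∈ P.support ∨ y ∈ Q.support := by
    rw [hc, Walk.mem_support_append_iff] at hy
    exact hy.imp id (hmemQrev y).mp
  have hedgeP : ∀ e ∈ P.edges, e ∈ c.edges := by
    intro e he; rw [hc, Walk.edges_append, List.mem_append]; exact Or.inl he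
  have hedgeQ : ∀ e ∈ Q.edges, e ∈ c.edges := by
    intro e he; rw [hc, Walk.edges_append, List.mem_append]
    right; rw [Walk.edges_reverse, List.mem_reverse]; exact he
  by_cases hP2 : x ∈ P.support ∧ y ∈ P.support
  · exact hnedge (hedgeP _ (hPchord x hP2.1 y hP2.2 hadj))
  by_cases hQ2 : x ∈ Q.support ∧ y ∈ Q.support
  · exact hnedge (hedgeQ _ (hQchord x hQ2.1 y hQ2.2 hadj))
  -- mixed case
  have huP : u ∈ P.support := P.start_mem_support
  have hwP : w ∈ P.support := P.end_mem_support
  have huQ : u ∈ Q.support := Q.start_mem_support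
  have hwQ : w ∈ Q.support := Q.end_mem_support
  have key : ∀ z, (z ∈ P.support ∧ z ∉ Q.support → z ∈ A) ∧ (z ∈ Q.support ∧ z ∉ P.support → z ∈ B) := by
    intro z
    constructor
    · rintro ⟨h1, h2⟩
      rcases hPsupp z h1 with h | h
      · exact h
      · rcases h with rfl | rfl
        · exact absurd huQ h2
        · exact absurd hwQ h2
    · rintro ⟨h1, h2⟩
      rcases hQsupp z h1 with h | h
      · exact h
      · rcases h with rfl | rfl
        · exact absurd huP h2
        · exact absurd hwP h2
  rcases hxm with hxP | hxQ
  · have hyQ : y ∈ Q.support := by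
      rcases hym with h | h
      · exact absurd ⟨hxP, h⟩ hP2
      · exact h
    have hxQ : x ∉ Q.support := fun h => hQ2 ⟨h, hyQ⟩
    have hyP : y ∉ P.support := fun h => hP2 ⟨hxP, h⟩
    exact hnoedge x ((key x).1 ⟨hxP, hxQ⟩) y ((key y).2 ⟨hyQ, hyP⟩) hadj
  · have hyP : y ∈ P.support := by
      rcases hym with h | h
      · exact h
      · exact absurd ⟨hxQ, h⟩ hQ2
    have hxP : x ∉ P.support := fun h => hP2 ⟨h, hyP⟩
    have hyQ : y ∉ Q.support := fun h => hQ2 ⟨hxQ, h⟩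
    exact hnoedge y ((key y).1 ⟨hyP, hyQ⟩) x ((key x).2 ⟨hxQ, hxP⟩) hadj.symm
end C


section D
variable {V : Type} {G : SimpleGraph V} [Fintype V] [DecidableEq V]

def SimpIn (G : SimpleGraph V) (s : Set V) (v : V) : Prop :=
  ∀ x ∈ s, ∀ y ∈ s, G.Adj v x → G.Adj v y → x ≠ y → G.Adj x y

def CliqueOn (G : SimpleGraph V) (s : Set V) : Prop :=
  ∀ x ∈ s, ∀ y ∈ s, x ≠ y → G.Adj x y

def DiracConcl (G : SimpleGraph V) (s : Set V) : Prop :=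
  ∃ a ∈ s, ∃ b ∈ s, SimpIn G s a ∧ SimpIn G s b ∧ ¬ G.Adj a b ∧ (CliqueOn G s ∨ a ≠ b)

lemma no_walk_pair {x y : V} (hxy : x ≠ y) (hnadj : ¬ G.Adj x y) (p : G.Walk x y)
    (hp : ∀ z ∈ p.support, z ∈ ({x, y} : Set V)) : False := by
  cases p with
  | nil => exact hxy rfl
  | @cons _ c _ h q =>
      have hc : c ∈ ({x, y} : Set V) := by
        apply hp
        rw [Walk.support_cons]
        exact List.mem_cons_of_mem _ q.start_mem_support
      rcases hc with rfl | rfl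
      · exact G.irrefl h
      · exact hnadj h

lemma nbr_side {s S : Set V} {x y u : V} (hxS : x ∉ S)
    (hsep : ¬ WalkIn G (s \ S) x y) (hu : u ∈ S)
    (hwalk : WalkIn G (s \ (S \ {u})) x y) :
    ∃ a, (a ∈ s \ S ∧ WalkIn G (s \ S) x a) ∧ G.Adj u a := by
  obtain ⟨p, hp⟩ := hwalk
  have hup : u ∈ p.support := by
    by_contra hup
    refine hsep ⟨p, fun z hz => ?_⟩
    have := hp z hz
    have hzu : z ≠ u := fun h => hup (h ▸ hz)
    exact ⟨this.1, fun hzS => this.2 ⟨hzS, hzu⟩⟩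
  set q := p.takeUntil u hup with hqdef
  have hcount : q.support.count u = 1 := p.count_support_takeUntil_eq_one hup
  have hqsupp : ∀ z ∈ q.support, z ∈ p.support := p.support_takeUntil_subset hup
  cases hq : q.reverse with
  | nil => exact absurd hu hxS
  | @cons _ a _ h r =>
      have hsupp_rev : q.reverse.support = u :: r.support := by rw [hq, Walk.support_cons]
      have hcount' : q.reverse.support.count u = 1 := by
        rw [Walk.support_reverse, List.count_reverse]; exact hcount
      have hur : u ∉ r.support := by
        rw [hsupp_rev, List.count_cons_self] at hcount'
        have : r.support.count u = 0 := by omega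
        exact List.count_eq_zero.mp this
      have hrsub : ∀ z ∈ r.support, z ∈ q.support := by
        intro z hz
        have : z ∈ q.reverse.support := by rw [hsupp_rev]; exact List.mem_cons_of_mem _ hz
        rwa [Walk.support_reverse, List.mem_reverse] at this
      have hrS : ∀ z ∈ r.support, z ∈ s \ S := by
        intro z hz
        have h1 := hp z (hqsupp z (hrsub z hz))
        have hzu : z ≠ u := fun hzu => hur (hzu ▸ hz)
        exact ⟨h1.1, fun hzS => h1.2 ⟨hzS, hzu⟩⟩
      have haA : a ∈ s \ S := hrS a r.start_mem_support
      refine ⟨a, ⟨haA, ?_⟩, h⟩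
      exact ⟨r.reverse, fun z hz => hrS z (by rwa [Walk.support_reverse, List.mem_reverse] at hz)⟩

lemma reach_closed {s S : Set V} {x v z : V}
    (hv : v ∈ s \ S ∧ WalkIn G (s \ S) x v) (hz : z ∈ s \ S) (hadj : G.Adj v z) :
    z ∈ s \ S ∧ WalkIn G (s \ S) x z :=
  ⟨hz, hv.2.concat hadj hz⟩

lemma reach_within {s S : Set V} {x v : V} (hv : WalkIn G (s \ S) x v)
    (hx : x ∈ s \ S) :
    WalkIn G {w | w ∈ s \ S ∧ WalkIn G (s \ S) x w} x v := by
  obtain ⟨p, hp⟩ := hv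
  exact ⟨p, fun z hz => ⟨hp z hz, WalkIn.of_support p hp hz⟩⟩

lemma dirac_side {n : ℕ}
    (IH : ∀ s' : Set V, s'.ncard ≤ n → s'.Nonempty → DiracConcl G s')
    {s S : Set V} {x y : V} (hcard : s.ncard ≤ n + 1) (hSs : S ⊆ s)
    (hxs : x ∈ s) (hxS : x ∉ S) (hys : y ∈ s) (hyS : y ∉ S)
    (hsep : ¬ WalkIn G (s \ S) x y) (hclq : CliqueOn G S) :
    ∃ p, (p ∈ s \ S ∧ WalkIn G (s \ S) x p) ∧ SimpIn G s p := by
  set A : Set V := {w | w ∈ s \ S ∧ WalkIn G (s \ S) x w} with hA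
  have hxA : x ∈ A := ⟨⟨hxs, hxS⟩, WalkIn.refl ⟨hxs, hxS⟩⟩
  set s₁ : Set V := A ∪ S with hs₁
  have hs₁s : s₁ ⊆ s := by
    rintro z (hz | hz)
    · exact hz.1.1
    · exact hSs hz
  have hys₁ : y ∉ s₁ := by
    rintro (hz | hz)
    · exact hsep hz.2
    · exact hyS hz
  have hcard₁ : s₁.ncard ≤ n := by
    have hss : s₁ ⊂ s := ⟨hs₁s, fun hs => hys₁ (hs hys)⟩
    have := Set.ncard_lt_ncard hss (Set.toFinite s)
    omega
  obtain ⟨a₁, ha₁, b₁, hb₁, hsa, hsb, hnadj, hcase⟩ := IH s₁ hcard₁ ⟨x, Or.inl hxA⟩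
  -- find a simplicial vertex of s₁ inside A
  have hstep : ∃ p ∈ A, SimpIn G s₁ p := by
    rcases hcase with hclq₁ | hne₁
    · exact ⟨x, hxA, fun x' hx' y' hy' _ _ hney => hclq₁ x' hx' y' hy' hney⟩
    · rcases ha₁ with haA | haS
      · exact ⟨a₁, haA, hsa⟩
      · rcases hb₁ with hbA | hbS
        · exact ⟨b₁, hbA, hsb⟩
        · exact absurd (hclq a₁ haS b₁ hbS hne₁) hnadj
  obtain ⟨p, hpA, hpsimp⟩ := hstep
  refine ⟨p, hpA, ?_⟩
  have hnbrs : ∀ z ∈ s, G.Adj p z → z ∈ s₁ := by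
    intro z hzs hadj
    by_cases hzS : z ∈ S
    · exact Or.inr hzS
    · exact Or.inl (reach_closed hpA ⟨hzs, hzS⟩ hadj)
  intro x' hx' y' hy' hax hay hney
  exact hpsimp x' (hnbrs x' hx' hax) y' (hnbrs y' hy' hay) hax hay hney

lemma dirac (hch : IsChordal G) :
    ∀ n (s : Set V), s.ncard ≤ n → s.Nonempty → DiracConcl G s := by
  intro n
  induction n with
  | zero =>
      intro s hcard hne
      exfalso
      have : s.ncard = 0 := le_antisymm hcard (Nat.zero_le _)
      rw [Set.ncard_eq_zero (Set.toFinite s)] at this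
      exact hne.ne_empty this
  | succ n IH =>
      intro s hcard hne
      by_cases hclq : CliqueOn G s
      · obtain ⟨a, ha⟩ := hne
        exact ⟨a, ha, a, ha, fun x' hx' y' hy' _ _ h => hclq x' hx' y' hy' h,
          fun x' hx' y' hy' _ _ h => hclq x' hx' y' hy' h, G.irrefl, Or.inl hclq⟩
      · rw [CliqueOn] at hclq
        push_neg at hclq
        obtain ⟨x, hxs, y, hys, hxy, hnadj⟩ := hclq
        set Sep : Set V → Prop :=
          fun S => S ⊆ s ∧ x ∉ S ∧ y ∉ S ∧ ¬ WalkIn G (s \ S) x y with hSep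
        have h₀ : Sep (s \ {x, y}) := by
          refine ⟨Set.diff_subset, fun h => h.2 (Or.inl rfl), fun h => h.2 (Or.inr rfl), ?_⟩
          rintro ⟨p, hp⟩
          refine no_walk_pair hxy hnadj p (fun z hz => ?_)
          have := hp z hz
          by_contra hz2
          exact this.2 ⟨this.1, hz2⟩
        set K : Set ℕ := {k | ∃ S, Sep S ∧ S.ncard = k} with hK
        have hKne : K.Nonempty := ⟨_, _, h₀, rfl⟩
        obtain ⟨S, hS, hcardS⟩ : ∃ S, Sep S ∧ S.ncard = sInf K := Nat.sInf_mem hKne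
        obtain ⟨hSs, hxS, hyS, hsep⟩ := hS
        have hmin : ∀ u ∈ S, WalkIn G (s \ (S \ {u})) x y := by
          intro u hu
          by_contra hsep'
          have hSep' : Sep (S \ {u}) :=
            ⟨Set.diff_subset.trans hSs, fun h => hxS h.1, fun h => hyS h.1, hsep'⟩
          have h1 : sInf K ≤ (S \ {u}).ncard := Nat.sInf_le ⟨_, hSep', rfl⟩
          have h2 : (S \ {u}).ncard < S.ncard :=
            Set.ncard_lt_ncard (Set.sdiff_singleton_ssubset.mpr hu) (Set.toFinite S)
          omega
        have hsep' : ¬ WalkIn G (s \ S) y x := fun h => hsep h.symm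
        set A : Set V := {w | w ∈ s \ S ∧ WalkIn G (s \ S) x w} with hA
        set B : Set V := {w | w ∈ s \ S ∧ WalkIn G (s \ S) y w} with hB
        have hABdisj : ∀ z, z ∈ A → z ∈ B → False := by
          rintro z ⟨_, hz1⟩ ⟨_, hz2⟩
          exact hsep (hz1.trans hz2.symm)
        have hnoedge : ∀ a ∈ A, ∀ b ∈ B, ¬ G.Adj a b := by
          intro a ha b hb hadj
          exact hABdisj b (reach_closed ha hb.1 hadj) hb
        have hclqS : CliqueOn G S := by
          intro u hu w hw huw
          obtain ⟨au, hau, hadjau⟩ := nbr_side hxS hsep hu (hmin u hu)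
          obtain ⟨aw, haw, hadjaw⟩ := nbr_side hxS hsep hw (hmin w hw)
          have hSA : ∀ z ∈ S, z ∉ A ∪ B := by
            rintro z hz (h | h) <;> exact h.1.2 hz
          refine sep_clique hch (A := A) (B := B) ?_ hnoedge (hSA u hu) (hSA w hw) huw ?_ ?_
          · rw [Set.disjoint_left]
            intro z hz1 hz2
            exact hABdisj z hz1 hz2
          · -- path through A
            have hxsS : x ∈ s \ S := ⟨hxs, hxS⟩
            have w1 : WalkIn G (A ∪ {u, w}) u au := by
              refine WalkIn.concat (WalkIn.refl ?_) hadjau (Or.inl hau)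
              · exact Or.inr (Or.inl rfl)
            have w2 : WalkIn G (A ∪ {u, w}) au aw := by
              refine WalkIn.mono Set.subset_union_left ?_
              exact ((reach_within hau.2 hxsS).symm).trans (reach_within haw.2 hxsS)
            have w3 : WalkIn G (A ∪ {u, w}) u w :=
              (w1.trans w2).concat hadjaw.symm (Or.inr (Or.inr rfl))
            exact w3
          · -- path through B
            obtain ⟨bu, hbu, hadjbu⟩ := nbr_side hyS hsep' hu ((hmin u hu).symm)
            obtain ⟨bw, hbw, hadjbw⟩ := nbr_side hyS hsep' hw ((hmin w hw).symm)
            have hysS : y ∈ s \ S := ⟨hys, hyS⟩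
            have w1 : WalkIn G (B ∪ {u, w}) u bu := by
              refine WalkIn.concat (WalkIn.refl ?_) hadjbu (Or.inl hbu)
              · exact Or.inr (Or.inl rfl)
            have w2 : WalkIn G (B ∪ {u, w}) bu bw := by
              refine WalkIn.mono Set.subset_union_left ?_
              exact ((reach_within hbu.2 hysS).symm).trans (reach_within hbw.2 hysS)
            exact (w1.trans w2).concat hadjbw.symm (Or.inr (Or.inr rfl))
        obtain ⟨pA, hpA, hpAsimp⟩ :=
          dirac_side IH hcard hSs hxs hxS hys hyS hsep hclqS
        obtain ⟨pB, hpB, hpBsimp⟩ :=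
          dirac_side IH hcard hSs hys hyS hxs hxS hsep' hclqS
        have hpAA : pA ∈ A := hpA
        have hpBB : pB ∈ B := hpB
        have hnadjAB : ¬ G.Adj pA pB := hnoedge pA hpAA pB hpBB
        have hneAB : pA ≠ pB := by
          rintro rfl
          exact hABdisj pA hpAA hpBB
        exact ⟨pA, hpA.1.1, pB, hpB.1.1, hpAsimp, hpBsimp, hnadjAB, Or.inr hneAB⟩
end D


section E
variable {V : Type} {G : SimpleGraph V} [Fintype V] [DecidableEq V]

lemma peo (hch : IsChordal G) :
    ∀ n (s : Set V), s.ncard ≤ n →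
      ∃ l : List V, l.Nodup ∧ {v | v ∈ l} = s ∧
        ∀ i : Fin l.length, SimpIn G {w | w ∈ l.drop (i : ℕ)} (l.get i) := by
  intro n
  induction n with
  | zero =>
      intro s hcard
      have : s = ∅ := by
        rw [← Set.ncard_eq_zero (Set.toFinite s)]; omega
      subst this
      refine ⟨[], List.nodup_nil, by ext v; simp, fun i => absurd i.2 (by simp)⟩
  | succ n IH =>
      intro s hcard
      rcases Set.eq_empty_or_nonempty s with rfl | hne
      · refine ⟨[], List.nodup_nil, by ext v; simp, fun i => absurd i.2 (by simp)⟩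
      · obtain ⟨a, has, _, _, hsa, _⟩ := dirac hch (n + 1) s hcard hne
        have hcard' : (s \ {a}).ncard ≤ n := by
          have := Set.ncard_lt_ncard (Set.sdiff_singleton_ssubset.mpr has) (Set.toFinite s)
          omega
        obtain ⟨l', hnd', hcov', hsuf'⟩ := IH (s \ {a}) hcard'
        have hal' : a ∉ l' := by
          intro h
          have : a ∈ s \ {a} := hcov' ▸ h
          exact this.2 rfl
        refine ⟨a :: l', List.nodup_cons.mpr ⟨hal', hnd'⟩, ?_, ?_⟩
        · ext v
          simp only [Set.mem_setOf_eq, List.mem_cons]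
          constructor
          · rintro (rfl | h)
            · exact has
            · exact ((hcov' ▸ (Set.mem_setOf_eq ▸ h)) : v ∈ s \ {a}).1
          · intro hv
            by_cases hva : v = a
            · exact Or.inl hva
            · right
              have : v ∈ s \ {a} := ⟨hv, hva⟩
              rw [← hcov'] at this
              exact this
        · intro i
          induction i using Fin.cases with
          | zero =>
              have hset : {w | w ∈ (a :: l')} = s := by
                ext v
                simp only [Set.mem_setOf_eq, List.mem_cons]
                constructor
                · rintro (rfl | h)
                  · exact has
                  · exact ((hcov' ▸ (Set.mem_setOf_eq ▸ h)) : v ∈ s \ {a}).1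
                · intro hv
                  by_cases hva : v = a
                  · exact Or.inl hva
                  · right
                    have hv' : v ∈ s \ {a} := ⟨hv, hva⟩
                    rw [← hcov'] at hv'
                    exact hv'
              have : SimpIn G {w | w ∈ (a :: l')} a := by rw [hset]; exact hsa
              exact this
          | succ j =>
              have hdrop : (a :: l').drop ((j.succ : ℕ)) = l'.drop (j : ℕ) := rfl
              have hget : (a :: l').get j.succ = l'.get j := rfl
              rw [hdrop, hget]
              exact hsuf' j

lemma mem_drop_iff_indexOf {l : List V} (hnd : l.Nodup) :
    ∀ (k : ℕ) {w : V}, w ∈ l → (w ∈ l.drop k ↔ k ≤ l.idxOf w) := by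
  induction l with
  | nil => intro k w hw; simp at hw
  | cons a l' ih =>
      intro k w hw
      rcases List.nodup_cons.mp hnd with ⟨hal', hnd'⟩
      cases k with
      | zero => simpa using hw
      | succ k =>
          rw [List.drop_succ_cons]
          by_cases hwa : w = a
          · subst hwa
            rw [List.idxOf_cons_self]
            constructor
            · intro h; exact absurd (List.mem_of_mem_drop h) hal'
            · omega
          · rw [List.idxOf_cons_ne _ (fun h => hwa h.symm)]
            have hw' : w ∈ l' := (List.mem_cons.mp hw).resolve_left hwa
            rw [ih hnd' k hw']
            omega

end E


section F
variable {V : Type} {G : SimpleGraph V} [Fintype V] [DecidableEq V]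

/-- Rose–Tarjan: if the interior of a walk is strictly below both endpoints in a
perfect elimination order, the endpoints are adjacent. -/
lemma rose_tarjan {l₀ : List V} (hnd : l₀.Nodup) (hcov : ∀ v, v ∈ l₀)
    (hclq : ∀ v, CliqueOn G (G.neighborSet v ∩ {z | l₀.idxOf v < l₀.idxOf z})) :
    ∀ (k : ℕ) {a b : V}, a ≠ b → ∀ (p : G.Walk a b), p.length ≤ k →
      (∀ z ∈ p.support, z ≠ a → z ≠ b →
        l₀.idxOf z < l₀.idxOf a ∧ l₀.idxOf z < l₀.idxOf b) →
      G.Adj a b := by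
  intro k
  induction k with
  | zero =>
      intro a b hab p hlen _
      have h0 : p.length = 0 := by omega
      exact absurd (Walk.eq_of_length_eq_zero h0) hab
  | succ k ih =>
      intro a b hab p hlen hall
      set q := p.bypass with hq
      have hqpath : q.IsPath := p.bypass_isPath
      have hqsub : ∀ z ∈ q.support, z ∈ p.support := fun z hz => p.support_bypass_subset hz
      have hqlen : q.length ≤ k + 1 := le_trans p.length_bypass_le hlen
      have hallq : ∀ z ∈ q.support, z ≠ a → z ≠ b →
          l₀.idxOf z < l₀.idxOf a ∧ l₀.idxOf z < l₀.idxOf b :=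
        fun z hz => hall z (hqsub z hz)
      by_cases hI : ∃ z ∈ q.support, z ≠ a ∧ z ≠ b
      · -- interior nonempty: pick minimal index interior vertex
        set T : Set ℕ := {m | ∃ z ∈ q.support, (z ≠ a ∧ z ≠ b) ∧ l₀.idxOf z = m} with hT
        have hTne : T.Nonempty := by
          obtain ⟨z, hz1, hz2, hz3⟩ := hI
          exact ⟨_, z, hz1, ⟨hz2, hz3⟩, rfl⟩
        obtain ⟨x, hxsupp, ⟨hxa, hxb⟩, hxidx⟩ :
            ∃ z ∈ q.support, (z ≠ a ∧ z ≠ b) ∧ l₀.idxOf z = sInf T := Nat.sInf_mem hTne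
        have hxmin : ∀ z ∈ q.support, z ≠ a → z ≠ b → l₀.idxOf x ≤ l₀.idxOf z := by
          intro z hz1 hz2 hz3
          rw [hxidx]
          exact Nat.sInf_le ⟨z, hz1, ⟨hz2, hz3⟩, rfl⟩
        set tk := q.takeUntil x hxsupp with htk
        set dp := q.dropUntil x hxsupp with hdp
        have hspec : tk.append dp = q := q.take_spec hxsupp
        have hlen_split : tk.length + dp.length = q.length := by
          have := congrArg Walk.length hspec
          rwa [Walk.length_append] at this
        have hdisj : ∀ z, z ∈ tk.support → z ∈ dp.support.tail → False := by
          have hnodup : (tk.support ++ dp.support.tail).Nodup := by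
            have : q.support = tk.support ++ dp.support.tail := by
              rw [← hspec, Walk.support_append]
            rw [← this]
            exact hqpath.support_nodup
          intro z h1 h2
          exact (List.disjoint_of_nodup_append hnodup) h1 h2
        -- destructure tk from the end and dp from the front
        cases htkr : tk.reverse with
        | nil => exact absurd rfl hxa
        | @cons _ prev _ hprevadj r1 =>
          cases hdpc : dp with
          | nil => exact absurd rfl hxb
          | @cons _ nxt _ hnxtadj r2 =>
            have hprev_tk : prev ∈ tk.support := by
              have : prev ∈ tk.reverse.support := by
                rw [htkr, Walk.support_cons]
                exact List.mem_cons_of_mem _ r1.start_mem_support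
              rwa [Walk.support_reverse, List.mem_reverse] at this
            have hnxt_dp : nxt ∈ dp.support.tail := by
              rw [hdpc, Walk.support_cons]
              exact r2.start_mem_support
            have hprev_q : prev ∈ q.support := q.support_takeUntil_subset hxsupp hprev_tk
            have hnxt_q : nxt ∈ q.support := by
              apply q.support_dropUntil_subset hxsupp
              rw [← hdp, hdpc, Walk.support_cons]
              exact List.mem_cons_of_mem _ r2.start_mem_support
            have hprevnxt : prev ≠ nxt := fun h => hdisj prev hprev_tk (h ▸ hnxt_dp)
            have hidx_prev : l₀.idxOf x < l₀.idxOf prev := by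
              have hxprev : x ≠ prev := hprevadj.ne
              have hne_idx : l₀.idxOf x ≠ l₀.idxOf prev :=
                fun h => hxprev (List.idxOf_inj (hcov x) |>.mp h)
              by_cases h1 : prev = a
              · subst h1; exact (hallq x hxsupp hxa hxb).1
              · by_cases h2 : prev = b
                · subst h2; exact (hallq x hxsupp hxa hxb).2
                · exact lt_of_le_of_ne (hxmin prev hprev_q h1 h2) hne_idx
            have hidx_nxt : l₀.idxOf x < l₀.idxOf nxt := by
              have hxnxt : x ≠ nxt := hnxtadj.ne
              have hne_idx : l₀.idxOf x ≠ l₀.idxOf nxt :=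
                fun h => hxnxt (List.idxOf_inj (hcov x) |>.mp h)
              by_cases h1 : nxt = a
              · subst h1; exact (hallq x hxsupp hxa hxb).1
              · by_cases h2 : nxt = b
                · subst h2; exact (hallq x hxsupp hxa hxb).2
                · exact lt_of_le_of_ne (hxmin nxt hnxt_q h1 h2) hne_idx
            have hadj_pn : G.Adj prev nxt :=
              hclq x prev ⟨hprevadj, hidx_prev⟩ nxt ⟨hnxtadj, hidx_nxt⟩ hprevnxt
            -- construct the shorter walk
            set w' : G.Walk a b := r1.reverse.append (Walk.cons hadj_pn r2) with hw'
            have hw'len : w'.length ≤ k := by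
              have h1 : tk.reverse.length = r1.length + 1 := by rw [htkr, Walk.length_cons]
              rw [Walk.length_reverse] at h1
              have h2 : dp.length = r2.length + 1 := by rw [hdpc, Walk.length_cons]
              have : w'.length = r1.length + (r2.length + 1) := by
                rw [hw', Walk.length_append, Walk.length_reverse, Walk.length_cons]
              omega
            have hw'supp : ∀ z ∈ w'.support, z ∈ q.support := by
              intro z hz
              rw [hw', Walk.mem_support_append_iff] at hz
              rcases hz with hz | hz
              · rw [Walk.support_reverse, List.mem_reverse] at hz
                apply q.support_takeUntil_subset hxsupp
                have : z ∈ tk.reverse.support := by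
                  rw [htkr, Walk.support_cons]
                  exact List.mem_cons_of_mem _ hz
                rwa [Walk.support_reverse, List.mem_reverse] at this
              · rw [Walk.support_cons] at hz
                rcases List.mem_cons.mp hz with rfl | hz
                · exact hprev_q
                · apply q.support_dropUntil_subset hxsupp
                  rw [← hdp, hdpc, Walk.support_cons]
                  exact List.mem_cons_of_mem _ hz
            exact ih hab w' hw'len (fun z hz => hallq z (hw'supp z hz))
      · -- no interior vertex : q is a single edge
        push_neg at hI
        cases hqc : q with
        | nil => exact absurd rfl hab
        | @cons _ c _ h r =>
            have hc : c ∈ q.support := by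
              rw [hqc, Walk.support_cons]
              exact List.mem_cons_of_mem _ r.start_mem_support
            by_cases hca : c = a
            · subst hca
              exact absurd h (G.irrefl)
            · have hcb : c = b := hI c hc hca
              subst hcb
              exact h
end F


section G
variable {V : Type} {G : SimpleGraph V} [Fintype V] [DecidableEq V]

lemma mem_take_iff_indexOf {l : List V} (hnd : l.Nodup) (k : ℕ) {w : V} (hw : w ∈ l) :
    w ∈ l.take k ↔ l.idxOf w < k := by
  have hsplit : l.take k ++ l.drop k = l := List.take_append_drop k l
  have hnd' : (l.take k ++ l.drop k).Nodup := by rwa [hsplit]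
  have hdisj := List.disjoint_of_nodup_append hnd'
  constructor
  · intro h
    by_contra hk
    push_neg at hk
    exact hdisj h ((mem_drop_iff_indexOf hnd k hw).mpr hk)
  · intro h
    have : w ∈ l.take k ++ l.drop k := hsplit.symm ▸ hw
    rcases List.mem_append.mp this with h1 | h1
    · exact h1
    · have := (mem_drop_iff_indexOf hnd k hw).mp h1
      omega

lemma rev_indexOf {l : List V} (hnd : l.Nodup) {w : V} (hw : w ∈ l) :
    l.reverse.idxOf w = l.length - 1 - l.idxOf w := by
  have hlt : l.idxOf w < l.length := List.idxOf_lt_length_iff.mpr hw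
  have hj : l.length - 1 - l.idxOf w < l.reverse.length := by
    rw [List.length_reverse]; omega
  have hval : l.reverse[l.length - 1 - l.idxOf w] = w := by
    rw [List.getElem_reverse]
    have harith : l.length - 1 - (l.length - 1 - l.idxOf w) = l.idxOf w := by omega
    simp only [harith]
    exact List.getElem_idxOf hlt
  have := List.Nodup.idxOf_getElem ((List.nodup_reverse.mpr hnd)) (l.length - 1 - l.idxOf w) hj
  rwa [hval] at this

lemma no_escape {l₀ : List V} (hnd : l₀.Nodup) (hcov : ∀ v, v ∈ l₀)
    (hclq : ∀ v, CliqueOn G (G.neighborSet v ∩ {z | l₀.idxOf v < l₀.idxOf z}))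
    {v : V} :
    ∀ {c z : V} (p : G.Walk c z),
      (∀ x ∈ p.support, x ∉ G.neighborSet v ∩ {z' | l₀.idxOf v < l₀.idxOf z'}) →
      (∃ q : G.Walk v c, ∀ x ∈ q.support, x = v ∨ l₀.idxOf x < l₀.idxOf v) →
      l₀.idxOf v < l₀.idxOf z → False := by
  intro c z p
  induction p with
  | nil =>
      rintro _ ⟨q, hq⟩ hz
      rcases hq _ q.end_mem_support with rfl | h
      · omega
      · omega
  | @cons c d z h p' ih =>
      rintro hall ⟨q, hq⟩ hz
      have hd : d ∈ (Walk.cons h p').support := by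
        rw [Walk.support_cons]
        exact List.mem_cons_of_mem _ p'.start_mem_support
      have hall' : ∀ x ∈ p'.support, x ∉ G.neighborSet v ∩ {z' | l₀.idxOf v < l₀.idxOf z'} := by
        intro x hx
        exact hall x (by rw [Walk.support_cons]; exact List.mem_cons_of_mem _ hx)
      rcases lt_trichotomy (l₀.idxOf d) (l₀.idxOf v) with hlt | heq | hgt
      · -- extend q by the edge c-d
        refine ih hall' ⟨q.concat h, ?_⟩ hz
        intro x hx
        rw [Walk.support_concat, List.mem_append] at hx
        rcases hx with hx | hx
        · exact hq x hx
        · simp at hx; subst hx; exact Or.inr hlt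
      · -- d = v
        have hdv : d = v := List.idxOf_inj (hcov d) |>.mp heq
        subst hdv
        exact ih hall' ⟨Walk.nil, by simp⟩ hz
      · -- d strictly above v: rose-tarjan gives adjacency v-d, contradiction
        have hvd : v ≠ d := fun hvd => by rw [hvd] at hgt; omega
        have hadj : G.Adj v d := by
          refine rose_tarjan hnd hcov hclq (q.concat h).length hvd (q.concat h) le_rfl ?_
          intro x hx hxv hxd
          rw [Walk.support_concat, List.mem_append] at hx
          rcases hx with hx | hx
          · rcases hq x hx with rfl | hlow
            · exact absurd rfl hxv
            · exact ⟨hlow, by omega⟩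
          · simp at hx; exact absurd hx hxd
        exact hall d hd ⟨hadj, hgt⟩

lemma good_order (hch : IsChordal G) {t : ℕ}
    (hcon : ∀ S : Set V, S.ncard < t → ∀ u v, u ∉ S → v ∉ S → WalkIn G Sᶜ u v) :
    ∃ l : List V, l.Nodup ∧ (∀ v, v ∈ l) ∧
      ∀ i : Fin l.length,
        (min t (i : ℕ) : ℕ) ≤ (G.neighborSet (l.get i) ∩ {w | w ∈ l.take (i : ℕ)}).ncard := by
  obtain ⟨l₀, hnd, hcovset, hsuf⟩ := peo hch (Fintype.card V) Set.univ (by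
    rw [Set.ncard_univ]; exact le_of_eq (Nat.card_eq_fintype_card))
  have hcov : ∀ v, v ∈ l₀ := fun v => by
    have : v ∈ Set.univ := Set.mem_univ v
    rw [← hcovset] at this
    exact this
  -- cliqueness of upper neighborhoods
  have hclq : ∀ v, CliqueOn G (G.neighborSet v ∩ {z | l₀.idxOf v < l₀.idxOf z}) := by
    intro v x hx y hy hxy
    have hvl : l₀.idxOf v < l₀.length := List.idxOf_lt_length_iff.mpr (hcov v)
    have hgetv : l₀.get ⟨l₀.idxOf v, hvl⟩ = v := List.idxOf_get hvl
    have hs := hsuf ⟨l₀.idxOf v, hvl⟩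
    rw [hgetv] at hs
    have hx2 : l₀.idxOf v < l₀.idxOf x := hx.2
    have hy2 : l₀.idxOf v < l₀.idxOf y := hy.2
    have hxd : x ∈ {w | w ∈ l₀.drop (l₀.idxOf v)} :=
      (mem_drop_iff_indexOf hnd _ (hcov x)).mpr (by omega)
    have hyd : y ∈ {w | w ∈ l₀.drop (l₀.idxOf v)} :=
      (mem_drop_iff_indexOf hnd _ (hcov y)).mpr (by omega)
    exact hs x hxd y hyd hx.1 hy.1 hxy
  set n := l₀.length with hn
  refine ⟨l₀.reverse, (List.nodup_reverse.mpr hnd), fun v => List.mem_reverse.mpr (hcov v), ?_⟩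
  intro i
  have hin : (i : ℕ) < n := lt_of_lt_of_le i.2 (le_of_eq (List.length_reverse (as := l₀)))
  set v := l₀.reverse.get i with hv
  have hvval : v = l₀[n - 1 - (i : ℕ)]'(by omega) := by
    rw [hv]
    simp only [List.get_eq_getElem]
    exact List.getElem_reverse _
  have hidxv : l₀.idxOf v = n - 1 - (i : ℕ) := by
    rw [hvval]
    exact List.Nodup.idxOf_getElem hnd _ _
  have hclaim1 : {w | w ∈ l₀.reverse.take (i : ℕ)} = {z | l₀.idxOf v < l₀.idxOf z} := by
    ext w
    simp only [Set.mem_setOf_eq]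
    rw [mem_take_iff_indexOf (List.nodup_reverse.mpr hnd) _ (List.mem_reverse.mpr (hcov w)),
      rev_indexOf hnd (hcov w), hidxv]
    have hwlt : l₀.idxOf w < n := List.idxOf_lt_length_iff.mpr (hcov w)
    omega
  have hclaim2 : ({w | w ∈ l₀.reverse.take (i : ℕ)} : Set V).ncard = (i : ℕ) := by
    have hset : {w | w ∈ l₀.reverse.take (i : ℕ)} = ↑(l₀.reverse.take (i : ℕ)).toFinset := by
      ext w; simp [List.mem_toFinset]
    rw [hset, Set.ncard_coe_finset,
      List.toFinset_card_of_nodup ((List.take_sublist _ _).nodup (List.nodup_reverse.mpr hnd)),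
      List.length_take]
    exact min_eq_left (le_of_lt i.2)
  by_contra hlt
  push_neg at hlt
  set M : Set V := G.neighborSet v ∩ {z | l₀.idxOf v < l₀.idxOf z} with hM
  have hMeq : G.neighborSet v ∩ {w | w ∈ l₀.reverse.take (i : ℕ)} = M := by rw [hclaim1]
  rw [hMeq] at hlt
  have hMt : M.ncard < t := by have := min_le_left t (i : ℕ); omega
  have hMi : M.ncard < (i : ℕ) := by have := min_le_right t (i : ℕ); omega
  have hMsub : M ⊆ {w | w ∈ l₀.reverse.take (i : ℕ)} := by
    rw [hclaim1]; exact Set.inter_subset_right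
  obtain ⟨z, hzHi, hzM⟩ :=
    Set.exists_mem_notMem_of_ncard_lt_ncard
      (s := M) (t := {w | w ∈ l₀.reverse.take (i : ℕ)})
      (by rw [hclaim2]; exact hMi) (Set.toFinite _)
  have hzidx : l₀.idxOf v < l₀.idxOf z := by
    rw [hclaim1] at hzHi; exact hzHi
  have hvM : v ∉ M := fun h => G.irrefl h.1
  obtain ⟨p, hp⟩ := hcon M hMt v z hvM hzM
  exact no_escape hnd hcov hclq p (fun x hx => hp x hx) ⟨Walk.nil, by simp⟩ hzidx
end G



/-- `pi(G,τ) ≤ t(t+1)/2` for `t`-connected chordal graphs with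
thresholds at most `t`. -/
theorem stmt_7 {V : Type} [Fintype V] (G : SimpleGraph V) (t : ℕ)
    (hcon : TConnected G t) (hch : IsChordal G)
    (τ : V → ℤ) (hτ : ∀ u : V, τ u ≤ t) :
    piNum G τ ≤ t * (t + 1) / 2 := by
  classical
  have hconn : ∀ S : Set V, S.ncard < t → (G.induce (Sᶜ)).Connected := hcon.2
  have hcon' : ∀ S : Set V, S.ncard < t → ∀ u v, u ∉ S → v ∉ S → WalkIn G Sᶜ u v :=
    fun S hS u v hu hv => induce_connected_walkIn (hconn S hS) hu hv
  obtain ⟨l, hnd, hcov, hgood⟩ := good_order hch hcon'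
  set n := l.length with hn
  set σ : V → ℕ := fun u => (τ u - min t (l.idxOf u)).toNat with hσ
  have hPI : IsPartialIncentive G τ σ := by
    show hull G (fun u => τ u - σ u) ∅ = Set.univ
    apply Set.eq_univ_of_univ_subset
    intro v _
    apply Set.mem_sInter.mpr
    rintro H ⟨-, hHcl⟩
    -- show every vertex is in H, by induction on its index
    have main : ∀ k, ∀ v, v ∈ l → l.idxOf v < k → v ∈ H := by
      intro k
      induction k with
      | zero => intro v _ h; omega
      | succ k ih =>
          intro v hvl hvk
          by_cases hk : l.idxOf v < k
          · exact ih v hvl hk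
          · have hvek : l.idxOf v = k := by omega
            have hkn : k < n := by
              have := List.idxOf_lt_length_iff.mpr hvl
              omega
            have hget : l.get ⟨k, hkn⟩ = v := by
              subst hvek
              exact List.idxOf_get _
            have h1pre := hgood ⟨k, hkn⟩
            rw [hget] at h1pre
            have h1 : min t k ≤ (G.neighborSet v ∩ {w | w ∈ l.take k}).ncard := h1pre
            have h2 : G.neighborSet v ∩ {w | w ∈ l.take k} ⊆ G.neighborSet v ∩ H := by
              rintro w ⟨hw1, hw2⟩
              have hwl : w ∈ l := List.mem_of_mem_take hw2
              have := (mem_take_iff_indexOf hnd k hwl).mp hw2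
              exact ⟨hw1, ih w hwl this⟩
            have h3 : min t k ≤ (G.neighborSet v ∩ H).ncard :=
              le_trans h1 (Set.ncard_le_ncard h2 (Set.toFinite _))
            refine hHcl v ?_
            show τ v - (σ v : ℤ) ≤ ((G.neighborSet v ∩ H).ncard : ℤ)
            have hA : (τ v - (min t k : ℕ) : ℤ) ≤ (σ v : ℤ) := by
              rw [hσ]
              simp only [hvek]
              exact Int.self_le_toNat _
            have hB : ((min t k : ℕ) : ℤ) ≤ ((G.neighborSet v ∩ H).ncard : ℤ) :=
              Int.ofNat_le.mpr h3
            omega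
    have hvl := hcov v
    exact main n v hvl (List.idxOf_lt_length_iff.mpr hvl)
  have hle : piNum G τ ≤ ∑ u, σ u := Nat.sInf_le ⟨σ, hPI, rfl⟩
  refine le_trans hle ?_
  clear hle hPI
  -- bound the total weight
  have hstep : ∀ u : V, σ u ≤ t - l.idxOf u := by
    intro u
    have h3 := hτ u
    have hA : τ u - ((min t (l.idxOf u) : ℕ) : ℤ) ≤ ((t - l.idxOf u : ℕ) : ℤ) := by
      omega
    show (τ u - ((min t (l.idxOf u) : ℕ) : ℤ)).toNat ≤ t - l.idxOf u
    exact Int.toNat_le.mpr hA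
  calc ∑ u, σ u ≤ ∑ u : V, (t - l.idxOf u) := Finset.sum_le_sum (fun u _ => hstep u)
    _ = ∑ k ∈ Finset.range n, (t - k) := by
        refine Finset.sum_bij' (fun u _ => l.idxOf u)
          (fun k hk => l.get ⟨k, Finset.mem_range.mp hk⟩) ?_ ?_ ?_ ?_ ?_
        · intro u _
          rw [Finset.mem_range]
          exact List.idxOf_lt_length_iff.mpr (hcov u)
        · intro k hk
          exact Finset.mem_univ _
        · intro u _
          exact List.idxOf_get _
        · intro k hk
          exact List.get_idxOf hnd _
        · intro u _
          rfl
    _ ≤ ∑ k ∈ Finset.range (max n (t + 1)), (t - k) := by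
        apply Finset.sum_le_sum_of_subset
        exact Finset.range_subset_range.mpr (le_max_left _ _)
    _ = ∑ k ∈ Finset.range (t + 1), (t - k) := by
        symm
        apply Finset.sum_subset (Finset.range_subset_range.mpr (le_max_right _ _))
        intro k _ hk
        rw [Finset.mem_range] at hk
        omega
    _ = ∑ k ∈ Finset.range (t + 1), k := by
        have := Finset.sum_range_reflect (fun k => t - k) (t + 1)
        rw [← this]
        apply Finset.sum_congr rfl
        intro k hk
        rw [Finset.mem_range] at hk
        omega
    _ = t * (t + 1) / 2 := by
        rw [Finset.sum_range_id]
        simp only [Nat.add_sub_cancel]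
        rw [Nat.mul_comm]
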